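/- (Theorem 2, minimum-matching form.) Suppose in addition that γ'' = 2γ', that there exists at least one MMDC between A and B, that M is a minimum weight perfect matching of the constructed graph G (i.e. Weight(M) ≤ Weight(M'') for every perfect matching M'' of G), and that L is a minimum-cost MMDC between A and B (i.e. c(L) ≤ c(L'') for every MMDC L''). Then Weight(Main(M)) = c(L). -/

import Mathlib

open Finset

section Construction

variable {s t : ℕ}

/-- The left part `S` of the constructed complete bipartite graph `G`:
`A_i` (`α i` copies of `a_i`), `A'_i` (`α' i − α i` copies of `a_i`),
the dummy sets `X_j` (`β' j − β j` vertices) and `W_j` (`s − β' j` vertices). -/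
abbrev LeftV (s t : ℕ) (α α' : Fin s → ℕ) (β β' : Fin t → ℕ) : Type :=
  ((Σ i : Fin s, Fin (α i)) ⊕ (Σ i : Fin s, Fin (α' i - α i))) ⊕
  ((Σ j : Fin t, Fin (β' j - β j)) ⊕ (Σ j : Fin t, Fin (s - β' j)))

/-- The right part `T` of the constructed graph: the sets `Bset_i` (vertex `(i, j)`
is the copy `b_{ji}` of `b_j` lying in `Bset_i`; thus `B_j = {(i, j) : i}`) together
with the compensator set `Y` of `Σ_i α'_i − Σ_j β_j` dummy vertices. -/
abbrev RightV (s t : ℕ) (α' : Fin s → ℕ) (β : Fin t → ℕ) : Type :=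
  (Fin s × Fin t) ⊕ Fin (∑ i, α' i - ∑ j, β j)

variable {α α' : Fin s → ℕ} {β β' : Fin t → ℕ}

/-- Adjacency in the constructed graph `G`: each vertex of `A_i ∪ A'_i` is joined to every
vertex of `Bset_i`; each vertex of `A'_i` is joined to every vertex of `Y`; each vertex of
`X_j` is joined to every vertex of `B_j` and to every vertex of `Y`; each vertex of `W_j`
is joined to every vertex of `B_j`. -/
def Adj : LeftV s t α α' β β' → RightV s t α' β → Prop
  | .inl (.inl ⟨i, _⟩), .inl (i', _) => i' = i       -- A_i — Bset_i
  | .inl (.inl _), .inr _ => False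
  | .inl (.inr ⟨i, _⟩), .inl (i', _) => i' = i       -- A'_i — Bset_i
  | .inl (.inr _), .inr _ => True                     -- A'_i — Y
  | .inr (.inl ⟨j, _⟩), .inl (_, j') => j' = j       -- X_j — B_j
  | .inr (.inl _), .inr _ => True                     -- X_j — Y
  | .inr (.inr ⟨j, _⟩), .inl (_, j') => j' = j       -- W_j — B_j
  | .inr (.inr _), .inr _ => False

/-- Edge weights of the constructed graph `G`. -/
def wt (δ : Fin s → Fin t → ℝ) (γ' γ'' : ℝ) : LeftV s t α α' β β' → RightV s t α' β → ℝ
  | .inl _, .inl (i, j) => δ i j     -- main edges into b_{ji}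
  | .inl (.inl _), .inr _ => 0
  | .inl (.inr _), .inr _ => γ'      -- A'_i — Y
  | .inr (.inl _), .inl _ => γ'      -- X_j — B_j
  | .inr (.inl _), .inr _ => γ''     -- X_j — Y
  | .inr (.inr _), _ => 0            -- W_j — B_j

/-- An edge is a main edge when it joins `⋃_i (A_i ∪ A'_i)` to `⋃_i Bset_i`. -/
def IsMainEdge : LeftV s t α α' β β' → RightV s t α' β → Bool
  | .inl _, .inl _ => true
  | _, _ => false

/-- A perfect matching of `G` is a bijection between the two parts all of whose
pairs are edges of `G`. -/
def IsPM (M : LeftV s t α α' β β' ≃ RightV s t α' β) : Prop :=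
  ∀ v, Adj v (M v)

/-- `Weight(M)`, the total weight of a perfect matching. -/
noncomputable def totalWeight (δ : Fin s → Fin t → ℝ) (γ' γ'' : ℝ)
    (M : LeftV s t α α' β β' ≃ RightV s t α' β) : ℝ :=
  ∑ v, wt δ γ' γ'' v (M v)

/-- `Weight(Main(M))`, the total weight of the main edges of `M`. -/
noncomputable def mainWeight (δ : Fin s → Fin t → ℝ) (γ' γ'' : ℝ)
    (M : LeftV s t α α' β β' ≃ RightV s t α' β) : ℝ :=
  ∑ v ∈ univ.filter (fun v => IsMainEdge v (M v)), wt δ γ' γ'' v (M v)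

/-- `|Main(M)|`, the number of main edges of `M`. -/
def mainCount (M : LeftV s t α α' β β' ≃ RightV s t α' β) : ℕ :=
  (univ.filter (fun v => IsMainEdge v (M v))).card

/-- `L ⊆ A × B` is an MMDC between `A` and `B`: each `a_i` lies in at least `α i` and at
most `α' i` pairs, and each `b_j` lies in at least `β j` and at most `β' j` pairs. -/
def IsMMDC (α α' : Fin s → ℕ) (β β' : Fin t → ℕ) (L : Finset (Fin s × Fin t)) : Prop :=
  (∀ i, α i ≤ (L.filter (fun p => p.1 = i)).card ∧
    (L.filter (fun p => p.1 = i)).card ≤ α' i) ∧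
  (∀ j, β j ≤ (L.filter (fun p => p.2 = j)).card ∧
    (L.filter (fun p => p.2 = j)).card ≤ β' j)

/-- `c(L)`, the cost of a matching `L` between `A` and `B`. -/
noncomputable def cost (δ : Fin s → Fin t → ℝ) (L : Finset (Fin s × Fin t)) : ℝ :=
  ∑ p ∈ L, δ p.1 p.2

end Construction

section Lemmas
variable {s t : ℕ} {α α' : Fin s → ℕ} {β β' : Fin t → ℕ}

private def xInd (γ' : ℝ) : LeftV s t α α' β β' → ℝ
  | .inr (.inl _) => γ'
  | _ => 0

private def rInd (γ' : ℝ) : RightV s t α' β → ℝ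
  | .inr _ => γ'
  | _ => 0

lemma totalWeight_eq (δ : Fin s → Fin t → ℝ) (γ' : ℝ)
    (M : LeftV s t α α' β β' ≃ RightV s t α' β) (hM : IsPM M) :
    totalWeight δ γ' (2 * γ') M = mainWeight δ γ' (2 * γ') M
      + γ' * (((∑ j, (β' j - β j) : ℕ) : ℝ) + ((∑ i, α' i - ∑ j, β j : ℕ) : ℝ)) := by
  have key : ∀ v, wt δ γ' (2*γ') v (M v) =
      (if IsMainEdge v (M v) then wt δ γ' (2*γ') v (M v) else 0)
        + (xInd γ' v + rInd γ' (M v)) := by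
    intro v
    have h := hM v
    rcases hx : M v with (⟨i',j'⟩|y) <;>
      rcases v with ((⟨i,k⟩|⟨i,k⟩)|(⟨j,k⟩|⟨j,k⟩)) <;>
      first
      | (rw [hx] at h; exact h.elim)
      | (simp [wt, IsMainEdge, xInd, rInd]; try ring)
  have h1 : ∑ v, xInd γ' (α := α) (α' := α') (β := β) (β' := β') v
      = γ' * ((∑ j, (β' j - β j) : ℕ) : ℝ) := by
    simp [Fintype.sum_sum_type, xInd, Finset.sum_const, Fintype.card_sigma, mul_comm]
  have h2 : ∑ v, rInd γ' (M v) = γ' * ((∑ i, α' i - ∑ j, β j : ℕ) : ℝ) := by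
    rw [Equiv.sum_comp M (fun r => rInd γ' r)]
    simp [Fintype.sum_sum_type, rInd, Finset.sum_const, mul_comm]
  rw [totalWeight, mainWeight, Finset.sum_congr rfl (fun v _ => key v),
    Finset.sum_add_distrib, Finset.sum_add_distrib, ← Finset.sum_filter, h1, h2]
  ring

def LMset (M : LeftV s t α α' β β' ≃ RightV s t α' β) : Finset (Fin s × Fin t) :=
  univ.filter (fun p => (M.symm (Sum.inl p)).isLeft)

lemma mainWeight_eq_cost_LMset (δ : Fin s → Fin t → ℝ) (γ' γ'' : ℝ)
    (M : LeftV s t α α' β β' ≃ RightV s t α' β) :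
    mainWeight δ γ' γ'' M = cost δ (LMset M) := by
  classical
  have key : ∀ v, (if IsMainEdge v (M v) then wt δ γ' γ'' v (M v) else 0)
      = (fun r => match r with
          | Sum.inl p => if (M.symm (Sum.inl p)).isLeft then δ p.1 p.2 else 0
          | Sum.inr _ => (0:ℝ)) (M v) := by
    intro v
    rcases hx : M v with (⟨i,j⟩|y)
    · have hsv : M.symm (Sum.inl (i,j)) = v := by rw [← hx, Equiv.symm_apply_apply]
      rcases v with (a|b)
      · rcases a with (⟨i0,k⟩|⟨i0,k⟩) <;> simp [IsMainEdge, hsv, wt]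
      · simp [IsMainEdge, hsv]
    · rcases v with (a|b) <;> simp [IsMainEdge]
  have h2 : ∑ v, (if IsMainEdge v (M v) then wt δ γ' γ'' v (M v) else 0)
      = ∑ r : RightV s t α' β, (match r with
          | Sum.inl p => if (M.symm (Sum.inl p)).isLeft then δ p.1 p.2 else 0
          | Sum.inr _ => (0:ℝ)) := Fintype.sum_equiv M _ _ key
  rw [mainWeight, Finset.sum_filter, h2, Fintype.sum_sum_type]
  simp only [Finset.sum_const_zero, add_zero]
  rw [cost, LMset, Finset.sum_filter]

private def Grow (M : LeftV s t α α' β β' ≃ RightV s t α' β) (i : Fin s) :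
    RightV s t α' β → ℕ
  | Sum.inl p => if (M.symm (Sum.inl p)).isLeft ∧ p.1 = i then 1 else 0
  | Sum.inr _ => 0

private def Hcol (M : LeftV s t α α' β β' ≃ RightV s t α' β) (j : Fin t) :
    RightV s t α' β → ℕ
  | Sum.inl p => if ¬ (M.symm (Sum.inl p)).isLeft ∧ p.2 = j then 1 else 0
  | Sum.inr _ => 0

private lemma sigma_ite_sum {n : ℕ} (f : Fin n → ℕ) (i : Fin n) :
    (∑ a : (Σ i0 : Fin n, Fin (f i0)), (if a.1 = i then 1 else 0)) = f i := by
  rw [← Finset.univ_sigma_univ, Finset.sum_sigma]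
  have inner : ∀ i0 : Fin n, (∑ _k : Fin (f i0), (if i0 = i then 1 else 0))
      = if i0 = i then f i0 else 0 := by
    intro i0; split_ifs <;> simp
  rw [Finset.sum_congr rfl (fun i0 _ => inner i0)]
  simp

lemma LMset_row (M : LeftV s t α α' β β' ≃ RightV s t α' β) (hM : IsPM M) (i : Fin s) :
    α i ≤ ((LMset M).filter (fun p => p.1 = i)).card ∧
      ((LMset M).filter (fun p => p.1 = i)).card ≤ α i + (α' i - α i) := by
  classical
  have hcard : ((LMset M).filter (fun p => p.1 = i)).card = ∑ v, Grow M i (M v) := by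
    rw [LMset, Finset.filter_filter, Finset.card_filter,
      Fintype.sum_equiv M (fun v => Grow M i (M v)) (Grow M i) (fun v => rfl),
      Fintype.sum_sum_type]
    simp [Grow]
  have hA : ∀ a : (Σ i0 : Fin s, Fin (α i0)),
      Grow M i (M (Sum.inl (Sum.inl a))) = if a.1 = i then 1 else 0 := by
    rintro ⟨i0, k⟩
    have h := hM (Sum.inl (Sum.inl ⟨i0, k⟩))
    rcases hx : M (Sum.inl (Sum.inl ⟨i0,k⟩)) with (⟨i',j'⟩|y)
    · rw [hx] at h
      have h' : i' = i0 := h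
      have hsv : M.symm (Sum.inl (i',j')) = Sum.inl (Sum.inl ⟨i0,k⟩) := by
        rw [← hx, Equiv.symm_apply_apply]
      subst h'
      simp [Grow, hsv]
    · rw [hx] at h; exact h.elim
  have hA' : ∀ a : (Σ i0 : Fin s, Fin (α' i0 - α i0)),
      Grow M i (M (Sum.inl (Sum.inr a))) ≤ if a.1 = i then 1 else 0 := by
    rintro ⟨i0, k⟩
    rcases hx : M (Sum.inl (Sum.inr ⟨i0,k⟩)) with (⟨i',j'⟩|y)
    · have h := hM (Sum.inl (Sum.inr ⟨i0,k⟩))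
      rw [hx] at h
      have h' : i' = i0 := h
      subst h'
      show (if (M.symm (Sum.inl (i', j'))).isLeft ∧ i' = i then 1 else 0) ≤ _
      by_cases h2 : i' = i
      · simp only [h2, and_true, if_true]
        split_ifs <;> omega
      · simp [h2]
    · simp [Grow]
  have hXW : ∀ b : (Σ j0 : Fin t, Fin (β' j0 - β j0)) ⊕ (Σ j0 : Fin t, Fin (s - β' j0)),
      Grow M i (M (Sum.inr b)) = 0 := by
    intro b
    rcases hx : M (Sum.inr b) with (⟨i',j'⟩|y)
    · have hsv : M.symm (Sum.inl (i',j')) = Sum.inr b := by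
        rw [← hx, Equiv.symm_apply_apply]
      simp [Grow, hsv]
    · simp [Grow]
  have hsplit : ∑ v, Grow M i (M v)
      = (∑ a : (Σ i0 : Fin s, Fin (α i0)), Grow M i (M (Sum.inl (Sum.inl a))))
      + (∑ a : (Σ i0 : Fin s, Fin (α' i0 - α i0)), Grow M i (M (Sum.inl (Sum.inr a))))
      + ((∑ b : (Σ j0 : Fin t, Fin (β' j0 - β j0)), Grow M i (M (Sum.inr (Sum.inl b))))
        + ∑ b : (Σ j0 : Fin t, Fin (s - β' j0)), Grow M i (M (Sum.inr (Sum.inr b)))) := by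
    rw [Fintype.sum_sum_type, Fintype.sum_sum_type, Fintype.sum_sum_type]
  have hAv : (∑ a : (Σ i0 : Fin s, Fin (α i0)), Grow M i (M (Sum.inl (Sum.inl a)))) = α i := by
    rw [Finset.sum_congr rfl (fun a _ => hA a), sigma_ite_sum]
  have hA'v : (∑ a : (Σ i0 : Fin s, Fin (α' i0 - α i0)), Grow M i (M (Sum.inl (Sum.inr a))))
      ≤ α' i - α i := by
    calc _ ≤ ∑ a : (Σ i0 : Fin s, Fin (α' i0 - α i0)), (if a.1 = i then 1 else 0) :=
          Finset.sum_le_sum (fun a _ => hA' a)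
      _ = α' i - α i := sigma_ite_sum _ i
  have hX0 : (∑ b : (Σ j0 : Fin t, Fin (β' j0 - β j0)), Grow M i (M (Sum.inr (Sum.inl b)))) = 0 :=
    Finset.sum_eq_zero (fun b _ => hXW (Sum.inl b))
  have hW0 : (∑ b : (Σ j0 : Fin t, Fin (s - β' j0)), Grow M i (M (Sum.inr (Sum.inr b)))) = 0 :=
    Finset.sum_eq_zero (fun b _ => hXW (Sum.inr b))
  rw [hcard, hsplit, hAv, hX0, hW0]
  omega

lemma LMset_col (M : LeftV s t α α' β β' ≃ RightV s t α' β) (hM : IsPM M)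
    (hββ : ∀ j, β j ≤ β' j) (hβ's : ∀ j, β' j ≤ s) (j : Fin t) :
    β j ≤ ((LMset M).filter (fun p => p.2 = j)).card ∧
      ((LMset M).filter (fun p => p.2 = j)).card ≤ β' j := by
  classical
  have h1 : ((LMset M).filter (fun p => p.2 = j)).card + ∑ v, Hcol M j (M v) = s := by
    rw [LMset, Finset.filter_filter, Finset.card_filter,
      Fintype.sum_equiv M (fun v => Hcol M j (M v)) (Hcol M j) (fun v => rfl),
      Fintype.sum_sum_type]
    have hz : (∑ y : Fin (∑ i, α' i - ∑ j, β j), Hcol M j (Sum.inr y)) = 0 := by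
      simp [Hcol]
    rw [hz, add_zero, ← Finset.sum_add_distrib]
    have hpt : ∀ p : Fin s × Fin t,
        ((if (M.symm (Sum.inl p)).isLeft ∧ p.2 = j then 1 else 0)
          + Hcol M j (Sum.inl p)) = if p.2 = j then 1 else 0 := by
      intro p
      show _ + (if ¬ (M.symm (Sum.inl p)).isLeft ∧ p.2 = j then 1 else 0) = _
      by_cases hc : p.2 = j <;> by_cases hA : (M.symm (Sum.inl p)).isLeft <;>
        simp [hc, hA]
    rw [Finset.sum_congr rfl (fun p _ => hpt p), Fintype.sum_prod_type]
    simp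
  have hAA' : ∀ a : (Σ i0 : Fin s, Fin (α i0)) ⊕ (Σ i0 : Fin s, Fin (α' i0 - α i0)),
      Hcol M j (M (Sum.inl a)) = 0 := by
    intro a
    rcases hx : M (Sum.inl a) with (⟨i',j'⟩|y)
    · have hsv : M.symm (Sum.inl (i',j')) = Sum.inl a := by
        rw [← hx, Equiv.symm_apply_apply]
      simp [Hcol, hsv]
    · simp [Hcol]
  have hX : ∀ b : (Σ j0 : Fin t, Fin (β' j0 - β j0)),
      Hcol M j (M (Sum.inr (Sum.inl b))) ≤ if b.1 = j then 1 else 0 := by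
    rintro ⟨j0, k⟩
    rcases hx : M (Sum.inr (Sum.inl ⟨j0,k⟩)) with (⟨i',j'⟩|y)
    · have h := hM (Sum.inr (Sum.inl ⟨j0,k⟩))
      rw [hx] at h
      have h' : j' = j0 := h
      subst h'
      show (if ¬ (M.symm (Sum.inl (i', j'))).isLeft ∧ j' = j then 1 else 0) ≤ _
      by_cases h2 : j' = j
      · simp only [h2, and_true, if_true]
        split_ifs <;> omega
      · simp [h2]
    · simp [Hcol]
  have hW : ∀ b : (Σ j0 : Fin t, Fin (s - β' j0)),
      Hcol M j (M (Sum.inr (Sum.inr b))) = if b.1 = j then 1 else 0 := by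
    rintro ⟨j0, k⟩
    have h := hM (Sum.inr (Sum.inr ⟨j0,k⟩))
    rcases hx : M (Sum.inr (Sum.inr ⟨j0,k⟩)) with (⟨i',j'⟩|y)
    · rw [hx] at h
      have h' : j' = j0 := h
      subst h'
      have hsv : M.symm (Sum.inl (i',j')) = Sum.inr (Sum.inr ⟨j',k⟩) := by
        rw [← hx, Equiv.symm_apply_apply]
      simp [Hcol, hsv]
    · rw [hx] at h; exact h.elim
  have hsplit : ∑ v, Hcol M j (M v)
      = ((∑ a : (Σ i0 : Fin s, Fin (α i0)), Hcol M j (M (Sum.inl (Sum.inl a))))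
      + (∑ a : (Σ i0 : Fin s, Fin (α' i0 - α i0)), Hcol M j (M (Sum.inl (Sum.inr a)))))
      + ((∑ b : (Σ j0 : Fin t, Fin (β' j0 - β j0)), Hcol M j (M (Sum.inr (Sum.inl b))))
        + ∑ b : (Σ j0 : Fin t, Fin (s - β' j0)), Hcol M j (M (Sum.inr (Sum.inr b)))) := by
    rw [Fintype.sum_sum_type, Fintype.sum_sum_type, Fintype.sum_sum_type]
  have hz1 : (∑ a : (Σ i0 : Fin s, Fin (α i0)), Hcol M j (M (Sum.inl (Sum.inl a)))) = 0 :=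
    Finset.sum_eq_zero (fun a _ => hAA' (Sum.inl a))
  have hz2 : (∑ a : (Σ i0 : Fin s, Fin (α' i0 - α i0)), Hcol M j (M (Sum.inl (Sum.inr a)))) = 0 :=
    Finset.sum_eq_zero (fun a _ => hAA' (Sum.inr a))
  have hXv : (∑ b : (Σ j0 : Fin t, Fin (β' j0 - β j0)), Hcol M j (M (Sum.inr (Sum.inl b))))
      ≤ β' j - β j :=
    le_trans (Finset.sum_le_sum (fun b _ => hX b)) (le_of_eq (sigma_ite_sum _ j))
  have hWv : (∑ b : (Σ j0 : Fin t, Fin (s - β' j0)), Hcol M j (M (Sum.inr (Sum.inr b))))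
      = s - β' j := by
    rw [Finset.sum_congr rfl (fun b _ => hW b), sigma_ite_sum]
  rw [hsplit, hz1, hz2, hWv] at h1
  have := hββ j
  have := hβ's j
  omega

lemma LMset_isMMDC (M : LeftV s t α α' β β' ≃ RightV s t α' β) (hM : IsPM M)
    (hαα : ∀ i, α i ≤ α' i) (hββ : ∀ j, β j ≤ β' j) (hβ's : ∀ j, β' j ≤ s) :
    IsMMDC α α' β β' (LMset M) := by
  constructor
  · intro i
    have h := LMset_row M hM i
    have := hαα i
    exact ⟨h.1, by omega⟩
  · intro j
    exact LMset_col M hM hββ hβ's j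

/-! ### Construction of a perfect matching from an MMDC -/

private def dL (L : Finset (Fin s × Fin t)) (i : Fin s) : ℕ :=
  (L.filter (fun p => p.1 = i)).card

private def eL (L : Finset (Fin s × Fin t)) (j : Fin t) : ℕ :=
  (L.filter (fun p => p.2 = j)).card

private lemma finSumFinEquiv_symm_inl {m n : ℕ} (z : Fin (m + n)) (h : (z : ℕ) < m) :
    finSumFinEquiv.symm z = Sum.inl ⟨(z : ℕ), h⟩ := by
  rw [Equiv.symm_apply_eq, finSumFinEquiv_apply_left]
  exact Fin.ext rfl

private def rearrL {PL RA Xc Xy W : Type*} :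
    ((PL ⊕ RA) ⊕ ((Xc ⊕ Xy) ⊕ W)) ≃ (PL ⊕ (Xc ⊕ (W ⊕ (RA ⊕ Xy)))) where
  toFun z := match z with
    | .inl (.inl l) => .inl l
    | .inl (.inr r) => .inr (.inr (.inr (.inl r)))
    | .inr (.inl (.inl x)) => .inr (.inl x)
    | .inr (.inl (.inr x)) => .inr (.inr (.inr (.inr x)))
    | .inr (.inr w) => .inr (.inr (.inl w))
  invFun z := match z with
    | .inl l => .inl (.inl l)
    | .inr (.inl x) => .inr (.inl (.inl x))
    | .inr (.inr (.inl w)) => .inr (.inr w)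
    | .inr (.inr (.inr (.inl r))) => .inl (.inr r)
    | .inr (.inr (.inr (.inr x))) => .inr (.inl (.inr x))
  left_inv := by rintro ((l|r)|((x|x)|w)) <;> rfl
  right_inv := by rintro (l|(x|(w|(r|x)))) <;> rfl

private def rearrR {PL Xc W Y : Type*} :
    ((PL ⊕ (Xc ⊕ W)) ⊕ Y) ≃ (PL ⊕ (Xc ⊕ (W ⊕ Y))) where
  toFun z := match z with
    | .inl (.inl l) => .inl l
    | .inl (.inr (.inl x)) => .inr (.inl x)
    | .inl (.inr (.inr w)) => .inr (.inr (.inl w))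
    | .inr y => .inr (.inr (.inr y))
  invFun z := match z with
    | .inl l => .inl (.inl l)
    | .inr (.inl x) => .inl (.inr (.inl x))
    | .inr (.inr (.inl w)) => .inl (.inr (.inr w))
    | .inr (.inr (.inr y)) => .inr y
  left_inv := by rintro ((l|(x|w))|y) <;> rfl
  right_inv := by rintro (l|(x|(w|y))) <;> rfl

private def rowJoin (L : Finset (Fin s × Fin t)) :
    (Σ i : Fin s, {p : Fin s × Fin t // p ∈ L.filter (fun q => q.1 = i)})
      ≃ {p : Fin s × Fin t // p ∈ L} where
  toFun x := ⟨x.2.val, (Finset.mem_filter.mp x.2.2).1⟩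
  invFun p := ⟨p.val.1, ⟨p.val, Finset.mem_filter.mpr ⟨p.2, rfl⟩⟩⟩
  left_inv := by
    rintro ⟨i, ⟨p, hp⟩⟩
    obtain ⟨hpL, hpi⟩ := Finset.mem_filter.mp hp
    subst hpi
    rfl
  right_inv p := rfl

private def colJoin (L : Finset (Fin s × Fin t)) :
    {p : Fin s × Fin t // p ∉ L}
      ≃ (Σ j : Fin t, {p : Fin s × Fin t // p ∈ univ.filter (fun q => q ∉ L ∧ q.2 = j)}) where
  toFun p := ⟨p.val.2, ⟨p.val, Finset.mem_filter.mpr ⟨Finset.mem_univ _, p.2, rfl⟩⟩⟩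
  invFun x := ⟨x.2.val, ((Finset.mem_filter.mp x.2.2).2).1⟩
  left_inv p := rfl
  right_inv := by
    rintro ⟨j, ⟨p, hp⟩⟩
    obtain ⟨-, -, hpj⟩ := Finset.mem_filter.mp hp
    subst hpj
    rfl

private noncomputable def rowE (L : Finset (Fin s × Fin t)) (i : Fin s)
    (hh : α i + (α' i - α i) = dL L i + (α' i - dL L i)) :
    (Fin (α i) ⊕ Fin (α' i - α i))
      ≃ ({p : Fin s × Fin t // p ∈ L.filter (fun q => q.1 = i)} ⊕ Fin (α' i - dL L i)) :=
  (finSumFinEquiv.trans (finCongr hh)).trans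
    (finSumFinEquiv.symm.trans
      (Equiv.sumCongr (Finset.equivFinOfCardEq (rfl : _ = dL L i)).symm (Equiv.refl _)))

private lemma rowE_A (L : Finset (Fin s × Fin t)) (i : Fin s)
    (hh : α i + (α' i - α i) = dL L i + (α' i - dL L i)) (hα : α i ≤ dL L i)
    (k : Fin (α i)) :
    ∃ x0, rowE (α := α) (α' := α') L i hh (Sum.inl k) = Sum.inl x0 := by
  have hlt : ((finCongr hh (finSumFinEquiv (Sum.inl k)) : Fin _) : ℕ) < dL L i := by
    simp only [finCongr_apply, Fin.coe_cast, finSumFinEquiv_apply_left, Fin.coe_castAdd]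
    exact lt_of_lt_of_le k.isLt hα
  have h1 := finSumFinEquiv_symm_inl (finCongr hh (finSumFinEquiv (Sum.inl k))) hlt
  refine ⟨(Finset.equivFinOfCardEq (rfl : _ = dL L i)).symm ⟨_, hlt⟩, ?_⟩
  show (Equiv.sumCongr (Finset.equivFinOfCardEq (rfl : _ = dL L i)).symm (Equiv.refl _))
    (finSumFinEquiv.symm (finCongr hh (finSumFinEquiv (Sum.inl k)))) = _
  rw [h1]
  rfl

private noncomputable def leftAEquiv (L : Finset (Fin s × Fin t))
    (hhA : ∀ i, α i + (α' i - α i) = dL L i + (α' i - dL L i)) :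
    ((Σ i : Fin s, Fin (α i)) ⊕ (Σ i : Fin s, Fin (α' i - α i)))
      ≃ ({p : Fin s × Fin t // p ∈ L} ⊕ (Σ i : Fin s, Fin (α' i - dL L i))) :=
  (Equiv.sigmaSumDistrib _ _).symm.trans
    ((Equiv.sigmaCongrRight (fun i => rowE L i (hhA i))).trans
      ((Equiv.sigmaSumDistrib _ _).trans (Equiv.sumCongr (rowJoin L) (Equiv.refl _))))

private def colXE (L : Finset (Fin s × Fin t)) (j : Fin t)
    (hh : β' j - β j = (β' j - eL L j) + (eL L j - β j)) :
    Fin (β' j - β j) ≃ (Fin (β' j - eL L j) ⊕ Fin (eL L j - β j)) :=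
  (finCongr hh).trans finSumFinEquiv.symm

private def leftXEquiv (L : Finset (Fin s × Fin t))
    (hhX : ∀ j, β' j - β j = (β' j - eL L j) + (eL L j - β j)) :
    (Σ j : Fin t, Fin (β' j - β j))
      ≃ ((Σ j : Fin t, Fin (β' j - eL L j)) ⊕ (Σ j : Fin t, Fin (eL L j - β j))) :=
  (Equiv.sigmaCongrRight (fun j => colXE L j (hhX j))).trans (Equiv.sigmaSumDistrib _ _)

private lemma leftX_cases (L : Finset (Fin s × Fin t))
    (hhX : ∀ j, β' j - β j = (β' j - eL L j) + (eL L j - β j)) (j : Fin t)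
    (k : Fin (β' j - β j)) :
    (∃ k', leftXEquiv (s := s) L hhX ⟨j, k⟩ = Sum.inl ⟨j, k'⟩) ∨
    (∃ k', leftXEquiv (s := s) L hhX ⟨j, k⟩ = Sum.inr ⟨j, k'⟩) := by
  rcases hc : colXE (s := s) L j (hhX j) k with k' | k'
  · left
    refine ⟨k', ?_⟩
    show (Equiv.sigmaSumDistrib (fun j => Fin (β' j - eL L j)) (fun j => Fin (eL L j - β j)))
      ⟨j, colXE (s := s) L j (hhX j) k⟩ = _
    rw [hc]
    rfl
  · right
    refine ⟨k', ?_⟩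
    show (Equiv.sigmaSumDistrib (fun j => Fin (β' j - eL L j)) (fun j => Fin (eL L j - β j)))
      ⟨j, colXE (s := s) L j (hhX j) k⟩ = _
    rw [hc]
    rfl

private noncomputable def leftTail (L : Finset (Fin s × Fin t))
    (hY : Fintype.card ((Σ i : Fin s, Fin (α' i - dL L i)) ⊕ (Σ j : Fin t, Fin (eL L j - β j)))
      = ∑ i, α' i - ∑ j, β j) :
    (({p : Fin s × Fin t // p ∈ L} ⊕ (Σ i : Fin s, Fin (α' i - dL L i))) ⊕
      (((Σ j : Fin t, Fin (β' j - eL L j)) ⊕ (Σ j : Fin t, Fin (eL L j - β j))) ⊕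
        (Σ j : Fin t, Fin (s - β' j)))) ≃
      ({p : Fin s × Fin t // p ∈ L} ⊕ ((Σ j : Fin t, Fin (β' j - eL L j)) ⊕
        ((Σ j : Fin t, Fin (s - β' j)) ⊕ Fin (∑ i, α' i - ∑ j, β j)))) :=
  rearrL.trans (Equiv.sumCongr (Equiv.refl _) (Equiv.sumCongr (Equiv.refl _)
    (Equiv.sumCongr (Equiv.refl _) (Fintype.equivFinOfCardEq hY))))

private noncomputable def leftD (L : Finset (Fin s × Fin t))
    (hhA : ∀ i, α i + (α' i - α i) = dL L i + (α' i - dL L i))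
    (hhX : ∀ j, β' j - β j = (β' j - eL L j) + (eL L j - β j))
    (hY : Fintype.card ((Σ i : Fin s, Fin (α' i - dL L i)) ⊕ (Σ j : Fin t, Fin (eL L j - β j)))
      = ∑ i, α' i - ∑ j, β j) :
    LeftV s t α α' β β' ≃
      ({p : Fin s × Fin t // p ∈ L} ⊕ ((Σ j : Fin t, Fin (β' j - eL L j)) ⊕
        ((Σ j : Fin t, Fin (s - β' j)) ⊕ Fin (∑ i, α' i - ∑ j, β j)))) :=
  (Equiv.sumCongr (leftAEquiv L hhA) (Equiv.sumCongr (leftXEquiv L hhX) (Equiv.refl _))).trans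
    (leftTail L hY)

private lemma leftD_A (L : Finset (Fin s × Fin t)) (hhA) (hhX) (hY)
    (hα : ∀ i, α i ≤ dL L i) (i : Fin s) (k : Fin (α i)) :
    ∃ x : {p : Fin s × Fin t // p ∈ L}, x.val.1 = i ∧
      leftD (s := s) (t := t) (α := α) (α' := α') (β := β) (β' := β') L hhA hhX hY
        (Sum.inl (Sum.inl ⟨i, k⟩)) = Sum.inl x := by
  obtain ⟨x0, hx0⟩ := rowE_A (α := α) (α' := α') L i (hhA i) (hα i) k
  refine ⟨rowJoin L ⟨i, x0⟩, (Finset.mem_filter.mp x0.2).2, ?_⟩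
  have h1 : leftAEquiv L hhA (Sum.inl ⟨i, k⟩)
      = (Equiv.sumCongr (rowJoin L) (Equiv.refl (Σ i : Fin s, Fin (α' i - dL L i))))
        ((Equiv.sigmaSumDistrib
          (fun i => {p : Fin s × Fin t // p ∈ L.filter (fun q => q.1 = i)})
          (fun i => Fin (α' i - dL L i))) ⟨i, rowE L i (hhA i) (Sum.inl k)⟩) := rfl
  rw [hx0] at h1
  have h0 : leftD L hhA hhX hY (Sum.inl (Sum.inl ⟨i, k⟩))
      = leftTail L hY (Sum.inl (leftAEquiv L hhA (Sum.inl ⟨i, k⟩))) := rfl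
  rw [h0, h1]
  rfl

private lemma leftD_A' (L : Finset (Fin s × Fin t)) (hhA) (hhX) (hY)
    (i : Fin s) (k : Fin (α' i - α i)) :
    (∃ x : {p : Fin s × Fin t // p ∈ L}, x.val.1 = i ∧
      leftD (s := s) (t := t) (α := α) (α' := α') (β := β) (β' := β') L hhA hhX hY
        (Sum.inl (Sum.inr ⟨i, k⟩)) = Sum.inl x) ∨
    (∃ y, leftD (s := s) (t := t) (α := α) (α' := α') (β := β) (β' := β') L hhA hhX hY
        (Sum.inl (Sum.inr ⟨i, k⟩)) = Sum.inr (Sum.inr (Sum.inr y))) := by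
  have h1 : leftAEquiv L hhA (Sum.inr ⟨i, k⟩)
      = (Equiv.sumCongr (rowJoin L) (Equiv.refl (Σ i : Fin s, Fin (α' i - dL L i))))
        ((Equiv.sigmaSumDistrib
          (fun i => {p : Fin s × Fin t // p ∈ L.filter (fun q => q.1 = i)})
          (fun i => Fin (α' i - dL L i))) ⟨i, rowE L i (hhA i) (Sum.inr k)⟩) := rfl
  have h0 : leftD L hhA hhX hY (Sum.inl (Sum.inr ⟨i, k⟩))
      = leftTail L hY (Sum.inl (leftAEquiv L hhA (Sum.inr ⟨i, k⟩))) := rfl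
  rcases hc : rowE (α := α) (α' := α') L i (hhA i) (Sum.inr k) with x0 | r
  · left
    refine ⟨rowJoin L ⟨i, x0⟩, (Finset.mem_filter.mp x0.2).2, ?_⟩
    rw [hc] at h1
    rw [h0, h1]
    rfl
  · right
    refine ⟨Fintype.equivFinOfCardEq hY (Sum.inl ⟨i, r⟩), ?_⟩
    rw [hc] at h1
    rw [h0, h1]
    rfl

private lemma leftD_X (L : Finset (Fin s × Fin t)) (hhA) (hhX) (hY)
    (j : Fin t) (k : Fin (β' j - β j)) :
    (∃ k', leftD (s := s) (t := t) (α := α) (α' := α') (β := β) (β' := β') L hhA hhX hY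
        (Sum.inr (Sum.inl ⟨j, k⟩)) = Sum.inr (Sum.inl ⟨j, k'⟩)) ∨
    (∃ y, leftD (s := s) (t := t) (α := α) (α' := α') (β := β) (β' := β') L hhA hhX hY
        (Sum.inr (Sum.inl ⟨j, k⟩)) = Sum.inr (Sum.inr (Sum.inr y))) := by
  have h0 : leftD L hhA hhX hY (Sum.inr (Sum.inl ⟨j, k⟩))
      = leftTail L hY (Sum.inr (Sum.inl (leftXEquiv L hhX ⟨j, k⟩))) := rfl
  rcases leftX_cases L hhX j k with ⟨k', hk'⟩ | ⟨k', hk'⟩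
  · left
    refine ⟨k', ?_⟩
    rw [h0, hk']
    rfl
  · right
    refine ⟨Fintype.equivFinOfCardEq hY (Sum.inr ⟨j, k'⟩), ?_⟩
    rw [h0, hk']
    rfl

private lemma leftD_W (L : Finset (Fin s × Fin t)) (hhA) (hhX) (hY)
    (j : Fin t) (k : Fin (s - β' j)) :
    leftD (s := s) (t := t) (α := α) (α' := α') (β := β) (β' := β') L hhA hhX hY
      (Sum.inr (Sum.inr ⟨j, k⟩)) = Sum.inr (Sum.inr (Sum.inl ⟨j, k⟩)) := rfl

private noncomputable def bigcol (L : Finset (Fin s × Fin t))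
    (hc : ∀ j, (univ.filter (fun q : Fin s × Fin t => q ∉ L ∧ q.2 = j)).card
      = (β' j - eL L j) + (s - β' j)) :
    {p : Fin s × Fin t // p ∉ L}
      ≃ ((Σ j : Fin t, Fin (β' j - eL L j)) ⊕ (Σ j : Fin t, Fin (s - β' j))) :=
  (colJoin L).trans
    ((Equiv.sigmaCongrRight (fun j =>
      (Finset.equivFinOfCardEq (hc j)).trans finSumFinEquiv.symm)).trans
      (Equiv.sigmaSumDistrib _ _))

private lemma bigcol_cases (L : Finset (Fin s × Fin t)) (hc) (q : {p : Fin s × Fin t // p ∉ L}) :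
    (∃ k, (bigcol (β' := β') L hc) q = Sum.inl ⟨q.val.2, k⟩) ∨
    (∃ k, (bigcol (β' := β') L hc) q = Sum.inr ⟨q.val.2, k⟩) := by
  rcases hE : ((Finset.equivFinOfCardEq (hc q.val.2)).trans finSumFinEquiv.symm)
      ((colJoin L q).snd) with k | k
  · left
    refine ⟨k, ?_⟩
    show (Equiv.sigmaSumDistrib (fun j => Fin (β' j - eL L j)) (fun j => Fin (s - β' j)))
      ⟨q.val.2,
        ((Finset.equivFinOfCardEq (hc q.val.2)).trans finSumFinEquiv.symm) ((colJoin L q).snd)⟩ = _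
    rw [hE]
    rfl
  · right
    refine ⟨k, ?_⟩
    show (Equiv.sigmaSumDistrib (fun j => Fin (β' j - eL L j)) (fun j => Fin (s - β' j)))
      ⟨q.val.2,
        ((Finset.equivFinOfCardEq (hc q.val.2)).trans finSumFinEquiv.symm) ((colJoin L q).snd)⟩ = _
    rw [hE]
    rfl

private noncomputable def rightD (L : Finset (Fin s × Fin t))
    (hc : ∀ j, (univ.filter (fun q : Fin s × Fin t => q ∉ L ∧ q.2 = j)).card
      = (β' j - eL L j) + (s - β' j)) :
    RightV s t α' β ≃
      ({p : Fin s × Fin t // p ∈ L} ⊕ ((Σ j : Fin t, Fin (β' j - eL L j)) ⊕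
        ((Σ j : Fin t, Fin (s - β' j)) ⊕ Fin (∑ i, α' i - ∑ j, β j)))) :=
  (Equiv.sumCongr
    (((Equiv.sumCompl (fun p => p ∈ L)).symm).trans
      (Equiv.sumCongr (Equiv.refl _) (bigcol L hc)))
    (Equiv.refl _)).trans rearrR

private lemma rightD_mem (L : Finset (Fin s × Fin t)) (hc) (p : Fin s × Fin t) (hp : p ∈ L) :
    rightD (s := s) (t := t) (α' := α') (β := β) (β' := β') L hc (Sum.inl p)
      = Sum.inl ⟨p, hp⟩ := by
  show rearrR (Sum.inl ((Equiv.sumCongr (Equiv.refl _) (bigcol L hc))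
    ((Equiv.sumCompl (fun q => q ∈ L)).symm p))) = _
  rw [Equiv.sumCompl_symm_apply_of_pos hp]
  rfl

private lemma rightD_notmem (L : Finset (Fin s × Fin t)) (hc) (p : Fin s × Fin t)
    (hp : p ∉ L) :
    (∃ k, rightD (s := s) (t := t) (α' := α') (β := β) (β' := β') L hc (Sum.inl p)
        = Sum.inr (Sum.inl ⟨p.2, k⟩)) ∨
    (∃ k, rightD (s := s) (t := t) (α' := α') (β := β) (β' := β') L hc (Sum.inl p)
        = Sum.inr (Sum.inr (Sum.inl ⟨p.2, k⟩))) := by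
  have h0 : rightD (s := s) (t := t) (α' := α') (β := β) (β' := β') L hc (Sum.inl p)
      = rearrR (Sum.inl ((Equiv.sumCongr (Equiv.refl _) (bigcol L hc))
        ((Equiv.sumCompl (fun q => q ∈ L)).symm p))) := rfl
  rw [Equiv.sumCompl_symm_apply_of_neg hp] at h0
  rcases bigcol_cases L hc ⟨p, hp⟩ with ⟨k, hk⟩ | ⟨k, hk⟩
  · left
    refine ⟨k, ?_⟩
    rw [h0, show (Equiv.sumCongr (Equiv.refl _) (bigcol L hc)) (Sum.inr ⟨p, hp⟩)
      = Sum.inr (bigcol L hc ⟨p, hp⟩) from rfl, hk]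
    rfl
  · right
    refine ⟨k, ?_⟩
    rw [h0, show (Equiv.sumCongr (Equiv.refl _) (bigcol L hc)) (Sum.inr ⟨p, hp⟩)
      = Sum.inr (bigcol L hc ⟨p, hp⟩) from rfl, hk]
    rfl

private lemma rightD_Y (L : Finset (Fin s × Fin t)) (hc) (y) :
    rightD (s := s) (t := t) (α' := α') (β := β) (β' := β') L hc (Sum.inr y)
      = Sum.inr (Sum.inr (Sum.inr y)) := rfl

private lemma rsymm1 (L : Finset (Fin s × Fin t)) (hc) (x : {p : Fin s × Fin t // p ∈ L}) :
    (rightD (s := s) (t := t) (α' := α') (β := β) (β' := β') L hc).symm (Sum.inl x)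
      = Sum.inl x.val := by
  rw [Equiv.symm_apply_eq, rightD_mem L hc x.val x.2]

private lemma rsymm2 (L : Finset (Fin s × Fin t)) (hc) (j : Fin t) (k : Fin (β' j - eL L j)) :
    ∃ p, p ∉ L ∧ p.2 = j ∧
      (rightD (s := s) (t := t) (α' := α') (β := β) (β' := β') L hc).symm
        (Sum.inr (Sum.inl ⟨j, k⟩)) = Sum.inl p := by
  rcases hr : (rightD (s := s) (t := t) (α' := α') (β := β) (β' := β') L hc).symm
      (Sum.inr (Sum.inl ⟨j, k⟩)) with p | y
  · have hrr : rightD (s := s) (t := t) (α' := α') (β := β) (β' := β') L hc (Sum.inl p)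
        = Sum.inr (Sum.inl ⟨j, k⟩) := by rw [← hr, Equiv.apply_symm_apply]
    by_cases hp : p ∈ L
    · rw [rightD_mem L hc p hp] at hrr
      exact absurd hrr (by simp)
    · rcases rightD_notmem L hc p hp with ⟨k', hk'⟩ | ⟨k', hk'⟩
      · rw [hk'] at hrr
        have h2 : p.2 = j := congrArg Sigma.fst (Sum.inl_injective (Sum.inr_injective hrr))
        exact ⟨p, hp, h2, rfl⟩
      · rw [hk'] at hrr
        exact absurd hrr (by simp)
  · have hrr : rightD (s := s) (t := t) (α' := α') (β := β) (β' := β') L hc (Sum.inr y)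
        = Sum.inr (Sum.inl ⟨j, k⟩) := by rw [← hr, Equiv.apply_symm_apply]
    rw [rightD_Y L hc y] at hrr
    exact absurd hrr (by simp)

private lemma rsymm3 (L : Finset (Fin s × Fin t)) (hc) (j : Fin t) (k : Fin (s - β' j)) :
    ∃ p, p ∉ L ∧ p.2 = j ∧
      (rightD (s := s) (t := t) (α' := α') (β := β) (β' := β') L hc).symm
        (Sum.inr (Sum.inr (Sum.inl ⟨j, k⟩))) = Sum.inl p := by
  rcases hr : (rightD (s := s) (t := t) (α' := α') (β := β) (β' := β') L hc).symm
      (Sum.inr (Sum.inr (Sum.inl ⟨j, k⟩))) with p | y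
  · have hrr : rightD (s := s) (t := t) (α' := α') (β := β) (β' := β') L hc (Sum.inl p)
        = Sum.inr (Sum.inr (Sum.inl ⟨j, k⟩)) := by rw [← hr, Equiv.apply_symm_apply]
    by_cases hp : p ∈ L
    · rw [rightD_mem L hc p hp] at hrr
      exact absurd hrr (by simp)
    · rcases rightD_notmem L hc p hp with ⟨k', hk'⟩ | ⟨k', hk'⟩
      · rw [hk'] at hrr
        exact absurd hrr (by simp)
      · rw [hk'] at hrr
        have h2 : p.2 = j := congrArg Sigma.fst
          (Sum.inl_injective (Sum.inr_injective (Sum.inr_injective hrr)))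
        exact ⟨p, hp, h2, rfl⟩
  · have hrr : rightD (s := s) (t := t) (α' := α') (β := β) (β' := β') L hc (Sum.inr y)
        = Sum.inr (Sum.inr (Sum.inl ⟨j, k⟩)) := by rw [← hr, Equiv.apply_symm_apply]
    rw [rightD_Y L hc y] at hrr
    exact absurd hrr (by simp)

private lemma rsymm4 (L : Finset (Fin s × Fin t)) (hc) (y) :
    (rightD (s := s) (t := t) (α' := α') (β := β) (β' := β') L hc).symm
      (Sum.inr (Sum.inr (Sum.inr y))) = Sum.inr y := by
  rw [Equiv.symm_apply_eq]
  rfl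

lemma exists_good_PM (hαα : ∀ i, α i ≤ α' i) (hββ : ∀ j, β j ≤ β' j) (hβ's : ∀ j, β' j ≤ s)
    (L : Finset (Fin s × Fin t)) (hL : IsMMDC α α' β β' L) :
    ∃ M_L : LeftV s t α α' β β' ≃ RightV s t α' β, IsPM M_L ∧ LMset M_L = L := by
  classical
  obtain ⟨hrow, hcol⟩ := hL
  have hdlo : ∀ i, α i ≤ dL L i := fun i => (hrow i).1
  have hdhi : ∀ i, dL L i ≤ α' i := fun i => (hrow i).2
  have helo : ∀ j, β j ≤ eL L j := fun j => (hcol j).1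
  have hehi : ∀ j, eL L j ≤ β' j := fun j => (hcol j).2
  have hhA : ∀ i, α i + (α' i - α i) = dL L i + (α' i - dL L i) := by
    intro i; have h1 := hdlo i; have h2 := hdhi i; have := hαα i; omega
  have hhX : ∀ j, β' j - β j = (β' j - eL L j) + (eL L j - β j) := by
    intro j; have h1 := helo j; have h2 := hehi j; have := hββ j; omega
  have hsumd : ∑ i, dL L i = L.card :=
    (Finset.card_eq_sum_card_fiberwise (f := Prod.fst) (fun p _ => Finset.mem_univ p.1)).symm
  have hsume : ∑ j, eL L j = L.card :=
    (Finset.card_eq_sum_card_fiberwise (f := Prod.snd) (fun p _ => Finset.mem_univ p.2)).symm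
  have h5 : ∑ i, (α' i - dL L i) + ∑ i, dL L i = ∑ i, α' i := by
    rw [← Finset.sum_add_distrib]
    exact Finset.sum_congr rfl (fun i _ => Nat.sub_add_cancel (hdhi i))
  have h6 : ∑ j, (eL L j - β j) + ∑ j, β j = ∑ j, eL L j := by
    rw [← Finset.sum_add_distrib]
    exact Finset.sum_congr rfl (fun j _ => Nat.sub_add_cancel (helo j))
  have hY : Fintype.card ((Σ i : Fin s, Fin (α' i - dL L i)) ⊕ (Σ j : Fin t, Fin (eL L j - β j)))
      = ∑ i, α' i - ∑ j, β j := by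
    rw [Fintype.card_sum, Fintype.card_sigma, Fintype.card_sigma]
    simp only [Fintype.card_fin]
    omega
  have hc : ∀ j, (univ.filter (fun q : Fin s × Fin t => q ∉ L ∧ q.2 = j)).card
      = (β' j - eL L j) + (s - β' j) := by
    intro j
    have hu : (univ.filter (fun q : Fin s × Fin t => q.2 = j)).card = s := by
      rw [show (univ.filter (fun q : Fin s × Fin t => q.2 = j)) = univ ×ˢ {j} from by
        ext q
        simp only [Finset.mem_filter, Finset.mem_univ, true_and, Finset.mem_product,
          Finset.mem_singleton]]
      simp
    have hsplitU : univ.filter (fun q : Fin s × Fin t => q.2 = j)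
        = (L.filter (fun q => q.2 = j))
          ∪ (univ.filter (fun q : Fin s × Fin t => q ∉ L ∧ q.2 = j)) := by
      ext q
      simp only [Finset.mem_filter, Finset.mem_union, Finset.mem_univ, true_and]
      tauto
    have hdisj : Disjoint (L.filter (fun q => q.2 = j))
        (univ.filter (fun q : Fin s × Fin t => q ∉ L ∧ q.2 = j)) := by
      rw [Finset.disjoint_left]
      intro q hq1 hq2
      simp only [Finset.mem_filter] at hq1 hq2
      exact hq2.2.1 hq1.1
    rw [hsplitU, Finset.card_union_of_disjoint hdisj] at hu
    have h1 := helo j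
    have h2 := hehi j
    have h3 := hβ's j
    have h4 : eL L j + (univ.filter (fun q : Fin s × Fin t => q ∉ L ∧ q.2 = j)).card = s := hu
    omega
  let ML : LeftV s t α α' β β' ≃ RightV s t α' β :=
    (leftD L hhA hhX hY).trans (rightD L hc).symm
  have hML : ∀ v, ML v = (rightD L hc).symm (leftD L hhA hhX hY v) := fun v => rfl
  have P1 : ∀ (i : Fin s) (k : Fin (α i)),
      ∃ p, p ∈ L ∧ p.1 = i ∧ ML (Sum.inl (Sum.inl ⟨i,k⟩)) = Sum.inl p := by
    intro i k
    obtain ⟨x, hx1, hx2⟩ := leftD_A L hhA hhX hY hdlo i k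
    refine ⟨x.val, x.2, hx1, ?_⟩
    rw [hML, hx2, rsymm1]
  have P2 : ∀ (i : Fin s) (k : Fin (α' i - α i)),
      (∃ p, p ∈ L ∧ p.1 = i ∧ ML (Sum.inl (Sum.inr ⟨i,k⟩)) = Sum.inl p) ∨
      (∃ y, ML (Sum.inl (Sum.inr ⟨i,k⟩)) = Sum.inr y) := by
    intro i k
    rcases leftD_A' L hhA hhX hY i k with ⟨x, hx1, hx2⟩ | ⟨y, hx2⟩
    · left; exact ⟨x.val, x.2, hx1, by rw [hML, hx2, rsymm1]⟩
    · right; exact ⟨y, by rw [hML, hx2, rsymm4]⟩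
  have P3 : ∀ (j : Fin t) (k : Fin (β' j - β j)),
      (∃ p, p ∉ L ∧ p.2 = j ∧ ML (Sum.inr (Sum.inl ⟨j,k⟩)) = Sum.inl p) ∨
      (∃ y, ML (Sum.inr (Sum.inl ⟨j,k⟩)) = Sum.inr y) := by
    intro j k
    rcases leftD_X L hhA hhX hY j k with ⟨k', hk'⟩ | ⟨y, hk'⟩
    · obtain ⟨p, h1, h2, h3⟩ := rsymm2 L hc j k'
      left; exact ⟨p, h1, h2, by rw [hML, hk']; exact h3⟩
    · right; exact ⟨y, by rw [hML, hk', rsymm4]⟩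
  have P4 : ∀ (j : Fin t) (k : Fin (s - β' j)),
      ∃ p, p ∉ L ∧ p.2 = j ∧ ML (Sum.inr (Sum.inr ⟨j,k⟩)) = Sum.inl p := by
    intro j k
    obtain ⟨p, h1, h2, h3⟩ := rsymm3 L hc j k
    exact ⟨p, h1, h2, by rw [hML, leftD_W]; exact h3⟩
  refine ⟨ML, ?_, ?_⟩
  · intro v
    rcases v with ((⟨i,k⟩|⟨i,k⟩)|(⟨j,k⟩|⟨j,k⟩))
    · obtain ⟨p, hpL, hp1, hv⟩ := P1 i k
      rcases p with ⟨p1, p2⟩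
      rw [hv]
      exact hp1
    · rcases P2 i k with ⟨p, hpL, hp1, hv⟩ | ⟨y, hv⟩
      · rcases p with ⟨p1, p2⟩; rw [hv]; exact hp1
      · rw [hv]; trivial
    · rcases P3 j k with ⟨p, hpL, hp2, hv⟩ | ⟨y, hv⟩
      · rcases p with ⟨p1, p2⟩; rw [hv]; exact hp2
      · rw [hv]; trivial
    · obtain ⟨p, hpL, hp2, hv⟩ := P4 j k
      rcases p with ⟨p1, p2⟩; rw [hv]; exact hp2
  · ext p
    simp only [LMset, Finset.mem_filter, Finset.mem_univ, true_and]
    constructor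
    · intro hleft
      rcases hv : ML.symm (Sum.inl p) with (a|b)
      · have hMv : ML (Sum.inl a) = Sum.inl p := by rw [← hv, Equiv.apply_symm_apply]
        rcases a with (⟨i,k⟩|⟨i,k⟩)
        · obtain ⟨p', hp'L, _, hv'⟩ := P1 i k
          have hpp := Sum.inl_injective (hv'.symm.trans hMv)
          rw [← hpp]
          exact hp'L
        · rcases P2 i k with ⟨p', hp'L, _, hv'⟩ | ⟨y, hv'⟩
          · have hpp := Sum.inl_injective (hv'.symm.trans hMv)
            rw [← hpp]
            exact hp'L
          · exact absurd (hv'.symm.trans hMv) (by simp)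
      · simp [hv] at hleft
    · intro hpL
      rcases hv : ML.symm (Sum.inl p) with (a|b)
      · simp [hv]
      · exfalso
        have hMv : ML (Sum.inr b) = Sum.inl p := by rw [← hv, Equiv.apply_symm_apply]
        rcases b with (⟨j,k⟩|⟨j,k⟩)
        · rcases P3 j k with ⟨p', hp'nL, _, hv'⟩ | ⟨y, hv'⟩
          · have hpp := Sum.inl_injective (hv'.symm.trans hMv)
            rw [hpp] at hp'nL
            exact hp'nL hpL
          · exact absurd (hv'.symm.trans hMv) (by simp)
        · obtain ⟨p', hp'nL, _, hv'⟩ := P4 j k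
          have hpp := Sum.inl_injective (hv'.symm.trans hMv)
          rw [hpp] at hp'nL
          exact hp'nL hpL

end Lemmas

/-- **Theorem 2, minimum-matching form.** Suppose moreover `γ'' = 2γ'`,
that there exists an MMDC between `A` and `B`, that `M` is a minimum weight perfect
matching of the constructed graph `G`, and that `L` is a minimum-cost MMDC between `A`
and `B`.  Then `Weight(Main(M)) = c(L)`. -/
theorem mainWeight_min_eq_cost_min {s t : ℕ} (α α' : Fin s → ℕ) (β β' : Fin t → ℕ)
    (δ : Fin s → Fin t → ℝ) (γ' γ'' : ℝ)
    (hs : 1 ≤ s) (ht : 1 ≤ t)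
    (hδ0 : ∀ i j, 0 ≤ δ i j)
    (hα1 : ∀ i, 1 ≤ α i) (hαα : ∀ i, α i ≤ α' i) (hα't : ∀ i, α' i ≤ t)
    (hβ1 : ∀ j, 1 ≤ β j) (hββ : ∀ j, β j ≤ β' j) (hβ's : ∀ j, β' j ≤ s)
    (hsum : ∑ j, β j ≤ ∑ i, α' i)
    (hγ' : ∀ i j, δ i j < γ') (hγ'' : γ' < γ'')
    (hγ2 : γ'' = 2 * γ')
    (M : LeftV s t α α' β β' ≃ RightV s t α' β) (hM : IsPM M)
    (hMmin : ∀ M'' : LeftV s t α α' β β' ≃ RightV s t α' β, IsPM M'' →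
      totalWeight δ γ' γ'' M ≤ totalWeight δ γ' γ'' M'')
    (L : Finset (Fin s × Fin t)) (hL : IsMMDC α α' β β' L)
    (hLmin : ∀ L'' : Finset (Fin s × Fin t), IsMMDC α α' β β' L'' →
      cost δ L ≤ cost δ L'') :
    mainWeight δ γ' γ'' M = cost δ L := by
  classical
  subst hγ2
  obtain ⟨M_L, hPM_L, hLM_L⟩ := exists_good_PM hαα hββ hβ's L hL
  have e1 := totalWeight_eq δ γ' M hM
  have e2 := totalWeight_eq δ γ' M_L hPM_L
  have e3 : mainWeight δ γ' (2 * γ') M = cost δ (LMset M) :=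
    mainWeight_eq_cost_LMset δ γ' (2 * γ') M
  have e4 : mainWeight δ γ' (2 * γ') M_L = cost δ L := by
    rw [mainWeight_eq_cost_LMset δ γ' (2 * γ') M_L, hLM_L]
  have hM1 : IsMMDC α α' β β' (LMset M) := LMset_isMMDC M hM hαα hββ hβ's
  have i1 : cost δ L ≤ cost δ (LMset M) := hLmin _ hM1
  have i2 : totalWeight δ γ' (2 * γ') M ≤ totalWeight δ γ' (2 * γ') M_L := hMmin M_L hPM_L
  linarith [e1, e2, e3, e4, i1, i2]
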